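/- Let n ≥ 1, p ∈ (0,1), q := 1-p, p_j := C(n,j)p^j q^{n-j}, q_j := Σ_{k=j}^n p_k, and j* := ⌊(n+1)p⌋ + 1. For j* ≤ j ≤ n define y_j := j - 1/2 + q_j/p_{j-1} + (q_j/p_{j-1} - q_j/p_j)/ln(p_{j-1}/p_j). Then j - 1 < y_j < j - 1/2 for every integer j with j* ≤ j ≤ n. -/

import Mathlib

section Aux

private lemma aux_log_stmt14 {x : ℝ} (hx : 1 < x) : 2*(x-1)/(x+1) < Real.log x := by
  have key : StrictMonoOn (fun t : ℝ => Real.log t - 2 + 4*(t+1)⁻¹) (Set.Ici 1) := by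
    apply strictMonoOn_of_deriv_pos (convex_Ici 1)
    · apply ContinuousOn.add
      · apply ContinuousOn.sub
        · exact Real.continuousOn_log.mono (by intro t ht; simp at ht ⊢; linarith)
        · exact continuousOn_const
      · apply ContinuousOn.mul continuousOn_const
        apply ContinuousOn.inv₀ (by fun_prop)
        intro t ht; simp at ht; intro h; linarith [h]
    · intro t ht
      rw [interior_Ici] at ht
      simp only [Set.mem_Ioi] at ht
      have ht0 : (0:ℝ) < t := by linarith
      have ht1 : t + 1 ≠ 0 := by positivity
      have hd : HasDerivAt (fun t : ℝ => Real.log t - 2 + 4*(t+1)⁻¹)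
          (t⁻¹ - 0 + 4 * (-(1 : ℝ) / (t+1)^2)) t := by
        apply HasDerivAt.add
        · exact (Real.hasDerivAt_log ht0.ne').sub (hasDerivAt_const t 2)
        · have : HasDerivAt (fun t : ℝ => (t+1)⁻¹) (-(1:ℝ)/(t+1)^2) t := by
            have h1 : HasDerivAt (fun t : ℝ => t + 1) 1 t := (hasDerivAt_id t).add_const 1
            exact h1.inv ht1
          exact this.const_mul 4
      rw [hd.deriv]
      have h2 : (0:ℝ) < (t+1)^2 := by positivity
      rw [div_eq_mul_inv, show t⁻¹ - 0 + 4 * (-(1:ℝ) * ((t+1)^2)⁻¹) = t⁻¹ - 4*((t+1)^2)⁻¹ by ring]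
      rw [sub_pos, inv_eq_one_div, inv_eq_one_div, mul_one_div, div_lt_div_iff₀ h2 ht0]
      nlinarith [sq_nonneg (t-1)]
  have h := key (Set.self_mem_Ici) (Set.mem_Ici.mpr hx.le) hx
  simp only [Real.log_one] at h
  norm_num at h
  have hxp : (0:ℝ) < x + 1 := by linarith
  rw [div_lt_iff₀ hxp]
  have hc : (x+1)⁻¹ * (x+1) = 1 := inv_mul_cancel₀ hxp.ne'
  nlinarith [h, hc]

private lemma key_ineq_stmt14 {A B S : ℝ} (hB : 0 < B) (hBA : B < A) (hS : B ≤ S)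
    (hgeo : S*(A-B) ≤ A*B) :
    -(1/2) < S/A + (S/A - S/B)/Real.log (A/B) ∧
      S/A + (S/A - S/B)/Real.log (A/B) < 0 := by
  have hA : 0 < A := hB.trans hBA
  have hS0 : 0 < S := hB.trans_le hS
  have hx : 1 < A/B := (one_lt_div hB).2 hBA
  have hL0 : 0 < Real.log (A/B) := Real.log_pos hx
  set L := Real.log (A/B) with hLdef
  have hL1 : L < A/B - 1 := Real.log_lt_sub_one_of_pos (by positivity) (ne_of_gt hx)
  have hL2 : 2*(A/B-1)/(A/B+1) < L := aux_log_stmt14 hx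
  have hnum : S/A - S/B = -(S*(A-B)/(A*B)) := by field_simp; ring
  constructor
  · rw [show (-(1/2) : ℝ) = (-(1/2) - S/A) + S/A by ring]
    have : -(1/2) - S/A < (S/A - S/B)/L := by
      rw [lt_div_iff₀ hL0, hnum]
      have h1 : 2*(A/B-1)/(A/B+1) = 2*(A-B)/(A+B) := by
        rw [div_eq_div_iff (by positivity) (by positivity)]
        field_simp
      rw [h1] at hL2
      have h2 : S*(A-B)/(A*B) ≤ (1/2 + S/A) * (2*(A-B)/(A+B)) := by
        have hkey2 : (1/2 + S/A) * (2*(A-B)/(A+B)) - S*(A-B)/(A*B)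
            = (A*B - S*(A-B))*(A-B)/(A*B*(A+B)) := by field_simp; ring
        have h3 : 0 ≤ (A*B - S*(A-B))*(A-B)/(A*B*(A+B)) :=
          div_nonneg (mul_nonneg (by linarith) (by linarith)) (by positivity)
        linarith
      nlinarith [mul_pos (show (0:ℝ) < 1/2 + S/A by positivity) (sub_pos.2 hL2)]
    linarith
  · have : (S/A - S/B)/L < -(S/A) := by
      rw [div_lt_iff₀ hL0, hnum]
      have hkey : -(S/A) * (A/B - 1) = -(S*(A-B)/(A*B)) := by field_simp
      nlinarith [mul_pos (div_pos hS0 hA) (sub_pos.2 hL1)]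
    linarith

end Aux

theorem stmt_14 (n : ℕ) (hn : 1 ≤ n) (p : ℝ) (hp : p ∈ Set.Ioo (0 : ℝ) 1)
    (q : ℝ) (hq : q = 1 - p)
    (pm : ℕ → ℝ) (hpm : ∀ j, pm j = (n.choose j : ℝ) * p ^ j * q ^ (n - j))
    (Q : ℕ → ℝ) (hQ : ∀ j, Q j = ∑ k ∈ Finset.Icc j n, pm k)
    (jstar : ℕ) (hjstar : jstar = ⌊((n : ℝ) + 1) * p⌋₊ + 1) :
    ∀ j : ℕ, jstar ≤ j → j ≤ n →
      (j : ℝ) - 1 <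
        (j : ℝ) - 1 / 2 + Q j / pm (j - 1) +
          (Q j / pm (j - 1) - Q j / pm j) / Real.log (pm (j - 1) / pm j) ∧
      (j : ℝ) - 1 / 2 + Q j / pm (j - 1) +
          (Q j / pm (j - 1) - Q j / pm j) / Real.log (pm (j - 1) / pm j) <
        (j : ℝ) - 1 / 2 := by
  obtain ⟨hp0, hp1⟩ := hp
  have hq0 : 0 < q := by rw [hq]; linarith
  intro j hj1 hj2
  have hj1n : 1 ≤ j := by omega
  -- positivity of pm k for k ≤ n
  have hpm_pos : ∀ k, k ≤ n → 0 < pm k := by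
    intro k hk
    rw [hpm]
    have := Nat.choose_pos hk
    positivity
  -- j > (n+1) p
  have hfl : ((n:ℝ)+1)*p < j := by
    have h1 := Nat.lt_floor_add_one (((n:ℝ)+1)*p)
    have h2 : (jstar:ℝ) ≤ (j:ℝ) := Nat.cast_le.2 hj1
    rw [hjstar] at h2
    push_cast at h2
    linarith
  -- recurrence
  have hrec : ∀ i, i < n → pm (i+1) * (((i:ℝ)+1) * q) = pm i * (((n:ℝ) - (i:ℝ)) * p) := by
    intro i hi
    have hc : ((n.choose (i+1) : ℝ)) * ((i:ℝ)+1) = (n.choose i : ℝ) * ((n:ℝ) - (i:ℝ)) := by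
      have h := congrArg (Nat.cast : ℕ → ℝ) (Nat.choose_succ_right_eq n i)
      push_cast [Nat.cast_sub hi.le] at h
      linarith
    have hq1 : q ^ (n - i) = q ^ (n - (i+1)) * q := by
      rw [show n - i = (n - (i+1)) + 1 by omega, pow_succ]
    rw [hpm, hpm, hq1]
    linear_combination (p^i * p * q^(n-(i+1)) * q) * hc
  have hApos : 0 < pm (j-1) := hpm_pos (j-1) (by omega)
  have hBpos : 0 < pm j := hpm_pos j hj2
  have hjR : (1:ℝ) ≤ (j:ℝ) := by exact_mod_cast hj1n
  -- recurrence at i = j - 1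
  have hrecj : pm j * ((j:ℝ) * q) = pm (j-1) * (((n:ℝ) - (j:ℝ) + 1) * p) := by
    have h := hrec (j-1) (by omega)
    rw [show j - 1 + 1 = j by omega] at h
    have hcast : ((j-1 : ℕ) : ℝ) = (j:ℝ) - 1 := by
      push_cast [Nat.cast_sub hj1n]; ring
    rw [hcast] at h
    convert h using 3 <;> ring
  have hineq : ((n:ℝ) - (j:ℝ) + 1)*p < (j:ℝ)*q := by
    rw [hq]; nlinarith
  have hBA : pm j < pm (j-1) := by
    have hjq : (0:ℝ) < (j:ℝ)*q := by positivity
    have h1 : pm j * ((j:ℝ)*q) < pm (j-1) * ((j:ℝ)*q) := by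
      rw [hrecj]
      exact mul_lt_mul_of_pos_left hineq hApos
    exact lt_of_mul_lt_mul_right h1 hjq.le
  set r := pm j / pm (j-1) with hrdef
  have hr0 : 0 < r := div_pos hBpos hApos
  have hr1 : r < 1 := (div_lt_one hApos).2 hBA
  have hjq : (0:ℝ) < (j:ℝ)*q := by positivity
  have hrq : r * ((j:ℝ)*q) = ((n:ℝ) - (j:ℝ) + 1) * p := by
    rw [hrdef, div_mul_eq_mul_div, hrecj]
    exact mul_div_cancel_left₀ _ hApos.ne'
  -- geometric decay
  have hclaim : ∀ m : ℕ, j + m ≤ n → pm (j+m) ≤ pm j * r^m := by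
    intro m
    induction m with
    | zero => intro _; simp
    | succ m ih =>
      intro hmn
      have hm' : j + m ≤ n := by omega
      have hlt : j + m < n := by omega
      have hstep := hrec (j+m) hlt
      push_cast at hstep
      have hmR : (0:ℝ) ≤ (m:ℝ) := Nat.cast_nonneg m
      have hnR : ((j:ℝ) + (m:ℝ)) ≤ (n:ℝ) := by exact_mod_cast hm'
      have hratio : ((n:ℝ) - ((j:ℝ)+(m:ℝ)))*p * ((j:ℝ)*q)
          ≤ (((n:ℝ)-(j:ℝ)+1)*p) * (((j:ℝ)+(m:ℝ)+1)*q) := by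
        have hnn : (0:ℝ) ≤ (n:ℝ)*(m:ℝ) + (n:ℝ) + (m:ℝ) + 1 := by positivity
        have hexp : (((n:ℝ)-(j:ℝ)+1)*p) * (((j:ℝ)+(m:ℝ)+1)*q)
            - ((n:ℝ) - ((j:ℝ)+(m:ℝ)))*p * ((j:ℝ)*q)
            = (p*q)*((n:ℝ)*(m:ℝ) + (n:ℝ) + (m:ℝ) + 1) := by ring
        nlinarith [mul_nonneg (mul_pos hp0 hq0).le hnn, hexp]
      have hD : ((n:ℝ) - ((j:ℝ)+(m:ℝ)))*p ≤ r * (((j:ℝ)+(m:ℝ)+1)*q) := by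
        have hcalc : (r * (((j:ℝ)+(m:ℝ)+1)*q)) * ((j:ℝ)*q)
            = (((n:ℝ)-(j:ℝ)+1)*p) * (((j:ℝ)+(m:ℝ)+1)*q) := by
          calc (r * (((j:ℝ)+(m:ℝ)+1)*q)) * ((j:ℝ)*q)
              = (r * ((j:ℝ)*q)) * (((j:ℝ)+(m:ℝ)+1)*q) := by ring
            _ = (((n:ℝ)-(j:ℝ)+1)*p) * (((j:ℝ)+(m:ℝ)+1)*q) := by rw [hrq]
        have h' : ((n:ℝ) - ((j:ℝ)+(m:ℝ)))*p * ((j:ℝ)*q)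
            ≤ (r * (((j:ℝ)+(m:ℝ)+1)*q)) * ((j:ℝ)*q) := by rw [hcalc]; exact hratio
        exact le_of_mul_le_mul_right h' hjq
      have hpmpos : 0 < pm (j+m) := hpm_pos _ hm'
      have hposC : (0:ℝ) < ((j:ℝ)+(m:ℝ)+1)*q := by positivity
      have h2 : pm (j+m+1) * (((j:ℝ)+(m:ℝ)+1)*q) ≤ (pm (j+m) * r) * (((j:ℝ)+(m:ℝ)+1)*q) := by
        rw [hstep]
        calc pm (j+m) * (((n:ℝ) - ((j:ℝ)+(m:ℝ)))*p)
            ≤ pm (j+m) * (r * (((j:ℝ)+(m:ℝ)+1)*q)) := by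
              exact mul_le_mul_of_nonneg_left hD hpmpos.le
          _ = (pm (j+m) * r) * (((j:ℝ)+(m:ℝ)+1)*q) := by ring
      have h3 : pm (j+m+1) ≤ pm (j+m) * r := le_of_mul_le_mul_right h2 hposC
      calc pm (j+(m+1)) = pm (j+m+1) := by rw [show j+(m+1) = j+m+1 by omega]
        _ ≤ pm (j+m) * r := h3
        _ ≤ (pm j * r^m) * r := mul_le_mul_of_nonneg_right (ih hm') hr0.le
        _ = pm j * r^(m+1) := by rw [pow_succ]; ring
  -- geometric sum bound
  have hQle : Q j ≤ pm j * (1-r)⁻¹ := by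
    rw [hQ, show Finset.Icc j n = Finset.Ico j (n+1) by rw [Finset.Ico_add_one_right_eq_Icc],
      Finset.sum_Ico_eq_sum_range]
    calc ∑ m ∈ Finset.range (n+1-j), pm (j+m)
        ≤ ∑ m ∈ Finset.range (n+1-j), pm j * r^m := by
          apply Finset.sum_le_sum
          intro m hm
          exact hclaim m (by simp at hm; omega)
      _ = pm j * ∑ m ∈ Finset.range (n+1-j), r^m := by rw [Finset.mul_sum]
      _ ≤ pm j * (1-r)⁻¹ := by
          apply mul_le_mul_of_nonneg_left _ hBpos.le
          rw [geom_sum_eq hr1.ne,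
            show (r^(n+1-j) - 1)/(r-1) = (1 - r^(n+1-j))/(1-r) by
              rw [← neg_div_neg_eq]; ring_nf,
            inv_eq_one_div]
          gcongr
          · linarith [pow_nonneg hr0.le (n+1-j)]
  have hS1 : pm j ≤ Q j := by
    rw [hQ]
    exact Finset.single_le_sum (f := pm)
      (fun k hk => (hpm_pos k (Finset.mem_Icc.1 hk).2).le)
      (Finset.mem_Icc.2 ⟨le_refl j, hj2⟩)
  have hgeo : Q j * (pm (j-1) - pm j) ≤ pm (j-1) * pm j := by
    have h1 : Q j * (1 - r) ≤ pm j := by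
      have h := mul_le_mul_of_nonneg_right hQle (le_of_lt (sub_pos.2 hr1))
      rwa [mul_assoc, inv_mul_cancel₀ (sub_pos.2 hr1).ne', mul_one] at h
    have h2 := mul_le_mul_of_nonneg_right h1 hApos.le
    have h3 : (1 - r) * pm (j-1) = pm (j-1) - pm j := by
      rw [hrdef]; field_simp
    nlinarith [h2, h3]
  obtain ⟨hlow, hup⟩ := key_ineq_stmt14 hBpos hBA hS1 hgeo
  constructor <;> linarith
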